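/- arXiv:1312.6530 — 2 statements merged into one kernel-verified Lean document; each statement's English description precedes it below -/
import Mathlib

section
/- For real x > 0 and y = 2x, the asymptotic relation ₂F₁(x,x;2x;r) ~ (Γ(2x)/Γ(x)²) log(1/(1−r)) holds as r → 1⁻. -/
set_option maxHeartbeats 1000000

open Real Filter Topology

lemma asc_prod (s : ℝ) : ∀ n : ℕ, (ascPochhammer ℝ n).eval s = ∏ j ∈ Finset.range n, (s + j)
  | 0 => by simp
  | (n+1) => by rw [ascPochhammer_succ_eval, Finset.prod_range_succ, asc_prod s n]

lemma coeff_tendsto (x : ℝ) (hx : 0 < x) :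
    Tendsto (fun k : ℕ => (k : ℝ) * ((ascPochhammer ℝ k).eval x * (ascPochhammer ℝ k).eval x /
      ((ascPochhammer ℝ k).eval (2 * x) * (k.factorial : ℝ)))) atTop
      (𝓝 (Real.Gamma (2 * x) / (Real.Gamma x) ^ 2)) := by
  rw [← tendsto_add_atTop_iff_nat 1]
  have hG : Tendsto (fun n : ℕ => Real.GammaSeq (2 * x) n / (Real.GammaSeq x n) ^ 2) atTop
      (𝓝 (Real.Gamma (2 * x) / (Real.Gamma x) ^ 2)) :=
    (Real.GammaSeq_tendsto_Gamma (2 * x)).div ((Real.GammaSeq_tendsto_Gamma x).pow 2)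
      (pow_ne_zero 2 (Real.Gamma_pos_of_pos hx).ne')
  refine Tendsto.congr' ?_ hG
  filter_upwards [eventually_ge_atTop 1] with n hn
  have hn0 : (0 : ℝ) < n := by exact_mod_cast hn
  have hP1 : (0 : ℝ) < ∏ j ∈ Finset.range (n + 1), (x + j) :=
    Finset.prod_pos fun j _ => by positivity
  have hP2 : (0 : ℝ) < ∏ j ∈ Finset.range (n + 1), (2 * x + j) :=
    Finset.prod_pos fun j _ => by positivity
  have hr : (n : ℝ) ^ (2 * x) = ((n : ℝ) ^ x) ^ 2 := by
    rw [two_mul, Real.rpow_add hn0, sq]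
  have hfac : (0 : ℝ) < n.factorial := by exact_mod_cast n.factorial_pos
  have hrx : (0 : ℝ) < (n : ℝ) ^ x := Real.rpow_pos_of_pos hn0 x
  rw [Real.GammaSeq, Real.GammaSeq, asc_prod, asc_prod, hr]
  rw [Nat.factorial_succ]
  push_cast
  field_simp


lemma abel_log {a : ℕ → ℝ} (ha : ∀ k, 0 ≤ a k) {l : ℝ} (hl : 0 < l)
    (h : Tendsto (fun k : ℕ => (k : ℝ) * a k) atTop (𝓝 l)) :
    Tendsto (fun r : ℝ => (∑' k, a k * r ^ k) / Real.log (1 / (1 - r)))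
      (𝓝[<] (1 : ℝ)) (𝓝 l) := by
  -- boundedness
  obtain ⟨B, hB⟩ := h.bddAbove_range
  have hB' : ∀ k : ℕ, (k : ℝ) * a k ≤ B := fun k => hB (Set.mem_range_self k)
  set M : ℝ := max B (a 0) with hM
  have hMa : ∀ k, a k ≤ M := by
    intro k
    cases k with
    | zero => exact le_max_right _ _
    | succ n =>
      refine le_trans ?_ (le_trans (hB' (n+1)) (le_max_left _ _))
      have h1 : (1 : ℝ) ≤ ((n + 1 : ℕ) : ℝ) := by exact_mod_cast Nat.one_le_iff_ne_zero.2 (Nat.succ_ne_zero n)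
      nlinarith [ha (n+1)]
  -- log tendsto atTop
  have h1 : Tendsto (fun r : ℝ => 1 - r) (𝓝[<] (1 : ℝ)) (𝓝[>] (0 : ℝ)) := by
    rw [tendsto_nhdsWithin_iff]
    constructor
    · have hc : Tendsto (fun r : ℝ => 1 - r) (𝓝 (1 : ℝ)) (𝓝 ((1 : ℝ) - 1)) :=
        tendsto_const_nhds.sub tendsto_id
      rw [sub_self] at hc
      exact hc.mono_left nhdsWithin_le_nhds
    · filter_upwards [self_mem_nhdsWithin] with r hr
      exact Set.mem_Ioi.mpr (sub_pos.2 (Set.mem_Iio.mp hr))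
  have hLtop : Tendsto (fun r : ℝ => Real.log (1 / (1 - r))) (𝓝[<] (1 : ℝ)) atTop := by
    have h2 : Tendsto (fun r : ℝ => Real.log (1 - r)) (𝓝[<] (1:ℝ)) atBot :=
      Real.tendsto_log_nhdsGT_zero.comp h1
    have h3 := tendsto_neg_atBot_atTop.comp h2
    refine h3.congr fun r => ?_
    simp [one_div, Real.log_inv, Function.comp]
  rw [Metric.tendsto_nhds]
  intro ε hε
  set ε' : ℝ := min (ε / 3) (l / 2) with hε'def
  have hε'pos : 0 < ε' := lt_min (by linarith) (by linarith)
  have hε'3 : ε' ≤ ε / 3 := min_le_left _ _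
  have hε'l : ε' ≤ l / 2 := min_le_right _ _
  obtain ⟨N, hN⟩ := (Metric.tendsto_atTop.mp h) ε' hε'pos
  have hNb : ∀ j : ℕ, N ≤ j → l - ε' ≤ (j : ℝ) * a j ∧ (j : ℝ) * a j ≤ l + ε' := by
    intro j hj
    have := hN j hj
    rw [Real.dist_eq, abs_lt] at this
    constructor <;> linarith [this.1, this.2]
  set A : ℝ := ∑ k ∈ Finset.range (N + 1), a k with hAdef
  set H : ℝ := ∑ k ∈ Finset.range N, 1 / ((k : ℝ) + 1) with hHdef
  have hA0 : 0 ≤ A := Finset.sum_nonneg fun k _ => ha k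
  have hH0 : 0 ≤ H := Finset.sum_nonneg fun k _ => by positivity
  set C : ℝ := max 1 (3 * max A (l * H) / ε) with hCdef
  have hC1 : (1 : ℝ) ≤ C := le_max_left _ _
  have hCA : 3 * A ≤ ε * C := by
    have h1 : 3 * max A (l * H) / ε ≤ C := le_max_right _ _
    rw [div_le_iff₀ hε] at h1
    nlinarith [le_max_left A (l * H)]
  have hClH : 3 * (l * H) ≤ ε * C := by
    have h1 : 3 * max A (l * H) / ε ≤ C := le_max_right _ _
    rw [div_le_iff₀ hε] at h1
    nlinarith [le_max_right A (l * H)]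
  filter_upwards [hLtop.eventually_gt_atTop C, self_mem_nhdsWithin,
    eventually_nhdsWithin_of_eventually_nhds (eventually_gt_nhds (by norm_num : (0:ℝ) < 1))]
    with r hLC hr1 hr0
  have hr1' : r < 1 := hr1
  set L : ℝ := Real.log (1 / (1 - r)) with hLdef
  have hLpos : 0 < L := lt_of_lt_of_le zero_lt_one (le_trans hC1 hLC.le)
  -- series facts
  have habs : |r| < 1 := abs_lt.2 ⟨by linarith, hr1'⟩
  have hLsum : HasSum (fun n : ℕ => r ^ (n + 1) / (n + 1)) L := by
    have := Real.hasSum_pow_div_log_of_abs_lt_one habs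
    rwa [show -Real.log (1 - r) = L by rw [hLdef, one_div, Real.log_inv]] at this
  have hsum_a : Summable (fun k : ℕ => a k * r ^ k) := by
    refine Summable.of_nonneg_of_le (fun k => mul_nonneg (ha k) (pow_nonneg hr0.le k))
      (fun k => mul_le_mul_of_nonneg_right (hMa k) (pow_nonneg hr0.le k))
      ((summable_geometric_of_lt_one hr0.le hr1').mul_left M)
  have hTa : Summable (fun m : ℕ => a (m + (N + 1)) * r ^ (m + (N + 1))) :=
    (summable_nat_add_iff (N + 1)).2 hsum_a
  have hTL : Summable (fun m : ℕ => r ^ (m + N + 1) / ((m : ℝ) + N + 1)) := by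
    have := (summable_nat_add_iff (f := fun n : ℕ => r ^ (n + 1) / ((n : ℝ) + 1)) N).2
      hLsum.summable
    refine this.congr fun m => ?_
    push_cast
    ring_nf
  -- split sums
  have hfa : (∑' k, a k * r ^ k) =
      (∑ k ∈ Finset.range (N + 1), a k * r ^ k) +
        ∑' m, a (m + (N + 1)) * r ^ (m + (N + 1)) :=
    (Summable.sum_add_tsum_nat_add (N + 1) hsum_a).symm
  have hfL : L = (∑ k ∈ Finset.range N, r ^ (k + 1) / ((k : ℝ) + 1)) +
      ∑' m, r ^ (m + N + 1) / ((m : ℝ) + N + 1) := by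
    rw [← hLsum.tsum_eq, ← Summable.sum_add_tsum_nat_add N hLsum.summable]
    congr 1
    refine tsum_congr fun m => ?_
    push_cast
    ring_nf
  set S : ℝ := ∑ k ∈ Finset.range N, r ^ (k + 1) / ((k : ℝ) + 1) with hSdef
  set TL : ℝ := ∑' m, r ^ (m + N + 1) / ((m : ℝ) + N + 1) with hTLdef
  set Ta : ℝ := ∑' m, a (m + (N + 1)) * r ^ (m + (N + 1)) with hTadef
  have hS0 : 0 ≤ S := Finset.sum_nonneg fun k _ => by positivity
  have hSH : S ≤ H := by
    refine Finset.sum_le_sum fun k _ => ?_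
    gcongr
    exact pow_le_one₀ hr0.le hr1'.le
  -- termwise bounds on tails
  have htail_ub : Ta ≤ (l + ε') * TL := by
    rw [hTadef, hTLdef, ← tsum_mul_left]
    refine Summable.tsum_le_tsum (fun m => ?_) hTa (hTL.mul_left _)
    have hj : N ≤ m + (N + 1) := by omega
    have hb := (hNb _ hj).2
    have hjpos : (0 : ℝ) < ((m + (N + 1) : ℕ) : ℝ) := by positivity
    have hrk : (0:ℝ) ≤ r ^ (m + (N + 1)) := pow_nonneg hr0.le _
    have : a (m + (N + 1)) ≤ (l + ε') / ((m + (N + 1) : ℕ) : ℝ) := by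
      rw [le_div_iff₀ hjpos]
      linarith [hb]
    calc a (m + (N + 1)) * r ^ (m + (N + 1))
        ≤ ((l + ε') / ((m + (N + 1) : ℕ) : ℝ)) * r ^ (m + (N + 1)) :=
          mul_le_mul_of_nonneg_right this hrk
      _ = (l + ε') * (r ^ (m + N + 1) / ((m : ℝ) + N + 1)) := by
          push_cast
          ring_nf
  have htail_lb : (l - ε') * TL ≤ Ta := by
    rw [hTadef, hTLdef, ← tsum_mul_left]
    refine Summable.tsum_le_tsum (fun m => ?_) (hTL.mul_left _) hTa
    have hj : N ≤ m + (N + 1) := by omega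
    have hb := (hNb _ hj).1
    have hjpos : (0 : ℝ) < ((m + (N + 1) : ℕ) : ℝ) := by positivity
    have hrk : (0:ℝ) ≤ r ^ (m + (N + 1)) := pow_nonneg hr0.le _
    have : (l - ε') / ((m + (N + 1) : ℕ) : ℝ) ≤ a (m + (N + 1)) := by
      rw [div_le_iff₀ hjpos]
      linarith [hb]
    calc (l - ε') * (r ^ (m + N + 1) / ((m : ℝ) + N + 1))
        = ((l - ε') / ((m + (N + 1) : ℕ) : ℝ)) * r ^ (m + (N + 1)) := by
          push_cast
          ring_nf
      _ ≤ a (m + (N + 1)) * r ^ (m + (N + 1)) := mul_le_mul_of_nonneg_right this hrk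
  have hTL0 : 0 ≤ TL := tsum_nonneg fun m => by positivity
  have hTa0 : 0 ≤ Ta := tsum_nonneg fun m => mul_nonneg (ha _) (pow_nonneg hr0.le _)
  have hpartial : (∑ k ∈ Finset.range (N + 1), a k * r ^ k) ≤ A := by
    refine Finset.sum_le_sum fun k _ => ?_
    nlinarith [ha k, pow_nonneg hr0.le k, pow_le_one₀ hr0.le hr1'.le (n := k)]
  have hpartial0 : 0 ≤ (∑ k ∈ Finset.range (N + 1), a k * r ^ k) :=
    Finset.sum_nonneg fun k _ => mul_nonneg (ha k) (pow_nonneg hr0.le k)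
  have hTLL : TL ≤ L := by rw [hfL]; linarith
  have hlε : 0 ≤ l - ε' := by linarith
  -- main bounds on f
  set f : ℝ := ∑' k, a k * r ^ k with hfdef
  have hf_ub : f ≤ A + (l + ε') * L := by
    rw [hfa]
    have : (l + ε') * TL ≤ (l + ε') * L :=
      mul_le_mul_of_nonneg_left hTLL (by linarith)
    linarith [htail_ub, hpartial]
  have hf_lb : (l - ε') * L - l * H ≤ f := by
    rw [hfa]
    have h4 : (l - ε') * TL = (l - ε') * L - (l - ε') * S := by rw [hfL]; ring
    have h5 : (l - ε') * S ≤ l * H :=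
      le_trans (mul_le_mul_of_nonneg_right (by linarith : l - ε' ≤ l) hS0)
        (mul_le_mul_of_nonneg_left hSH hl.le)
    linarith [htail_lb]
  -- conclude
  have hALe : A / L < ε / 3 := by
    rw [div_lt_iff₀ hLpos]
    have := mul_lt_mul_of_pos_left hLC hε
    linarith
  have hlHLe : l * H / L < ε / 3 := by
    rw [div_lt_iff₀ hLpos]
    have := mul_lt_mul_of_pos_left hLC hε
    linarith
  rw [Real.dist_eq, abs_lt]
  constructor
  · have hkey : (l - ε') - l * H / L ≤ f / L := by
      rw [le_div_iff₀ hLpos, sub_mul, div_mul_cancel₀ _ hLpos.ne']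
      linarith [hf_lb]
    linarith
  · have hkey : f / L ≤ (l + ε') + A / L := by
      rw [div_le_iff₀ hLpos, add_mul, div_mul_cancel₀ _ hLpos.ne']
      linarith [hf_ub]
    linarith


open Real Filter

/-- The real Gauss hypergeometric function `₂F₁(a, b; c; x)`, defined by its power
series. -/
noncomputable def hyp2F1 (a b c x : ℝ) : ℝ :=
  ∑' k : ℕ, ((ascPochhammer ℝ k).eval a * (ascPochhammer ℝ k).eval b /
    ((ascPochhammer ℝ k).eval c * (k.factorial : ℝ))) * x ^ k

/-- For `x > 0`, `₂F₁(x, x; 2x; r) ~ (Γ(2x)/Γ(x)²) log (1/(1-r))` as `r → 1⁻`. -/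
theorem hyp2F1_asymp_log (x : ℝ) (hx : 0 < x) :
    Tendsto
      (fun r : ℝ => hyp2F1 x x (2 * x) r /
        ((Real.Gamma (2 * x) / (Real.Gamma x) ^ 2) * Real.log (1 / (1 - r))))
      (nhdsWithin 1 (Set.Iio 1)) (nhds 1) := by
  set l : ℝ := Real.Gamma (2 * x) / (Real.Gamma x) ^ 2 with hldef
  have hl : 0 < l :=
    div_pos (Real.Gamma_pos_of_pos (by linarith)) (pow_pos (Real.Gamma_pos_of_pos hx) 2)
  have ha : ∀ k : ℕ, 0 ≤ (ascPochhammer ℝ k).eval x * (ascPochhammer ℝ k).eval x /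
      ((ascPochhammer ℝ k).eval (2 * x) * (k.factorial : ℝ)) := by
    intro k
    have h1 := ascPochhammer_pos k x hx
    have h2 := ascPochhammer_pos k (2 * x) (by linarith)
    have h3 : (0 : ℝ) < k.factorial := by exact_mod_cast k.factorial_pos
    positivity
  have habel := abel_log ha hl (coeff_tendsto x hx)
  have hdiv := habel.div_const l
  rw [div_self hl.ne'] at hdiv
  refine hdiv.congr fun r => ?_
  rw [div_div, mul_comm (Real.log (1 / (1 - r))) l]
  rfl
end

section
/- For real x, y with y > 0 and y < 2x, the asymptotic relation ₂F₁(x,x;y;r) ~ (Γ(y)Γ(2x−y)/Γ(x)²) (1−r)^{y−2x} holds as r → 1⁻. -/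
open Real Filter Topology

namespace Hyp2F1Aux

open MeasureTheory Set

noncomputable def P (t : ℝ) (k : ℕ) : ℝ := (ascPochhammer ℝ k).eval t

lemma P_pos {t : ℝ} (ht : 0 < t) (k : ℕ) : 0 < P t k := ascPochhammer_pos k t ht

lemma P_succ (t : ℝ) (k : ℕ) : P t (k + 1) = P t k * (t + k) := ascPochhammer_succ_eval k t

lemma P_zero (t : ℝ) : P t 0 = 1 := by simp [P]

lemma P_mul_Gamma {t : ℝ} (ht : 0 < t) (k : ℕ) :
    P t k * Real.Gamma t = Real.Gamma (t + k) := by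
  induction k with
  | zero => simp [P_zero]
  | succ k ih =>
    have h1 : (0:ℝ) < t + k := by positivity
    have h2 : Real.Gamma (t + (k + 1 : ℕ)) = (t + k) * Real.Gamma (t + k) := by
      push_cast
      rw [show t + ((k:ℝ) + 1) = (t + (k:ℝ)) + 1 by ring, Real.Gamma_add_one h1.ne']
    rw [h2, ← ih, P_succ]; ring

lemma P_prod (t : ℝ) (k : ℕ) : P t k = ∏ j ∈ Finset.range k, (t + j) := by
  induction k with
  | zero => simp [P_zero]
  | succ k ih => rw [P_succ, ih, Finset.prod_range_succ]

lemma tendsto_ratio (c d : ℝ) : Tendsto (fun n : ℕ => (c + n) / (d + n)) atTop (𝓝 1) := by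
  have h1 : Tendsto (fun n : ℕ => (d : ℝ) + n) atTop atTop :=
    tendsto_atTop_add_const_left _ d tendsto_natCast_atTop_atTop
  have h2 : Tendsto (fun n : ℕ => (c - d) / (d + n) + 1) atTop (𝓝 1) := by
    simpa using (tendsto_const_nhds.div_atTop h1).add_const 1
  refine h2.congr' ?_
  filter_upwards [h1.eventually_gt_atTop 0] with n hn
  field_simp
  ring

end Hyp2F1Aux

namespace Hyp2F1Aux
open MeasureTheory Set

lemma summable_b {s : ℝ} (hs : 0 < s) {r : ℝ} (hr0 : 0 < r) (hr1 : r < 1) :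
    Summable (fun k : ℕ => P s k / k.factorial * r ^ k) := by
  have hpos : ∀ k : ℕ, 0 < P s k / k.factorial * r ^ k := fun k => by
    have := P_pos hs k
    have h2 : (0:ℝ) < k.factorial := by positivity
    positivity
  refine summable_of_ratio_test_tendsto_lt_one hr1
    (Filter.Eventually.of_forall fun n => (hpos n).ne') ?_
  have key : ∀ n : ℕ, ‖P s (n+1) / (n+1).factorial * r ^ (n+1)‖ /
      ‖P s n / n.factorial * r ^ n‖ = (s + n) / (1 + n) * r := by
    intro n
    rw [Real.norm_of_nonneg (hpos (n+1)).le, Real.norm_of_nonneg (hpos n).le]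
    have h1 : P s n ≠ 0 := (P_pos hs n).ne'
    have h2 : (n.factorial : ℝ) ≠ 0 := by positivity
    have h3 : ((n:ℝ) + 1) ≠ 0 := by positivity
    have h4 : r ^ n ≠ 0 := by positivity
    rw [P_succ, Nat.factorial_succ, pow_succ]
    push_cast
    field_simp
    ring
  simp_rw [key]
  simpa using (tendsto_ratio s 1).mul_const r

lemma summable_a {x y : ℝ} (hx : 0 < x) (hy : 0 < y) {r : ℝ} (hr0 : 0 < r) (hr1 : r < 1) :
    Summable (fun k : ℕ => P x k * P x k / (P y k * k.factorial) * r ^ k) := by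
  have hpos : ∀ k : ℕ, 0 < P x k * P x k / (P y k * k.factorial) * r ^ k := fun k => by
    have := P_pos hx k
    have := P_pos hy k
    have h2 : (0:ℝ) < k.factorial := by positivity
    positivity
  refine summable_of_ratio_test_tendsto_lt_one hr1
    (Filter.Eventually.of_forall fun n => (hpos n).ne') ?_
  have key : ∀ n : ℕ, ‖P x (n+1) * P x (n+1) / (P y (n+1) * (n+1).factorial) * r ^ (n+1)‖ /
      ‖P x n * P x n / (P y n * n.factorial) * r ^ n‖
      = (x + n) / (y + n) * ((x + n) / (1 + n)) * r := by
    intro n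
    rw [Real.norm_of_nonneg (hpos (n+1)).le, Real.norm_of_nonneg (hpos n).le]
    have h1 : P x n ≠ 0 := (P_pos hx n).ne'
    have h1' : P y n ≠ 0 := (P_pos hy n).ne'
    have h2 : (n.factorial : ℝ) ≠ 0 := by positivity
    have h3 : ((n:ℝ) + 1) ≠ 0 := by positivity
    have h3' : y + (n:ℝ) ≠ 0 := by positivity
    have h4 : r ^ n ≠ 0 := by positivity
    rw [P_succ, P_succ, Nat.factorial_succ, pow_succ]
    push_cast
    field_simp
    ring
  simp_rw [key]
  simpa using ((tendsto_ratio x y).mul (tendsto_ratio x 1)).mul_const r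

end Hyp2F1Aux

namespace Hyp2F1Aux
open MeasureTheory Set

lemma tsum_b_eq {s : ℝ} (hs : 0 < s) {r : ℝ} (hr0 : 0 < r) (hr1 : r < 1) :
    ∑' k : ℕ, P s k / k.factorial * r ^ k = (1 - r) ^ (-s) := by
  set F : ℕ → ℝ → ℝ := fun k t => (r ^ k / k.factorial) * (Real.exp (-t) * t ^ (s + k - 1))
    with hF
  have hGs : (0:ℝ) < Real.Gamma s := Real.Gamma_pos_of_pos hs
  have hint : ∀ k : ℕ, IntegrableOn (F k) (Ioi 0) := by
    intro k
    exact (Real.GammaIntegral_convergent (by positivity : (0:ℝ) < s + k)).const_mul _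
  have hval : ∀ k : ℕ, ∫ t in Ioi 0, F k t = Real.Gamma s * (P s k / k.factorial * r ^ k) := by
    intro k
    rw [hF]
    simp only
    rw [MeasureTheory.integral_const_mul, ← Real.Gamma_eq_integral (by positivity : (0:ℝ) < s + k),
      ← P_mul_Gamma hs k]
    ring
  have hnonneg : ∀ k : ℕ, ∀ t ∈ Ioi (0:ℝ), 0 ≤ F k t := by
    intro k t ht
    have : (0:ℝ) < t := ht
    have h2 : (0:ℝ) < k.factorial := by positivity
    positivity
  have hnorm : ∀ k : ℕ, ∫ t in Ioi 0, ‖F k t‖ = Real.Gamma s * (P s k / k.factorial * r ^ k) := by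
    intro k
    rw [← hval k]
    refine setIntegral_congr_fun measurableSet_Ioi fun t ht => ?_
    exact Real.norm_of_nonneg (hnonneg k t ht)
  have hsum : Summable fun k : ℕ => ∫ t in Ioi 0, ‖F k t‖ := by
    simp_rw [hnorm]
    exact (summable_b hs hr0 hr1).mul_left _
  have hswap := MeasureTheory.integral_tsum_of_summable_integral_norm hint hsum
  -- compute pointwise sum
  have hpt : ∀ t ∈ Ioi (0:ℝ), (∑' k : ℕ, F k t)
      = t ^ (s - 1) * Real.exp (-((1 - r) * t)) := by
    intro t ht
    have ht' : (0:ℝ) < t := ht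
    have h1 : ∀ k : ℕ, F k t = (Real.exp (-t) * t ^ (s - 1)) * ((r * t) ^ k / k.factorial) := by
      intro k
      rw [hF]
      simp only
      rw [show s + k - 1 = (s - 1) + k by ring, Real.rpow_add ht', Real.rpow_natCast, mul_pow]
      ring
    rw [tsum_congr h1, tsum_mul_left]
    have h2 : (∑' k : ℕ, (r * t) ^ k / k.factorial) = Real.exp (r * t) := by
      rw [Real.exp_eq_exp_ℝ, NormedSpace.exp_eq_tsum_div]
    rw [h2, show -((1 - r) * t) = -t + r * t by ring, Real.exp_add]
    ring
  have hI : ∫ t in Ioi 0, (∑' k : ℕ, F k t)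
      = (1 / (1 - r)) ^ s * Real.Gamma s := by
    rw [setIntegral_congr_fun measurableSet_Ioi hpt]
    exact Real.integral_rpow_mul_exp_neg_mul_Ioi hs (by linarith)
  have hL : (∑' k : ℕ, ∫ t in Ioi 0, F k t) = Real.Gamma s * ∑' k : ℕ, P s k / k.factorial * r ^ k := by
    rw [tsum_congr hval, tsum_mul_left]
  rw [hL, hI] at hswap
  have h1r : (0:ℝ) < 1 - r := by linarith
  have : (1 / (1 - r)) ^ s = (1 - r) ^ (-s) := by
    rw [one_div, Real.inv_rpow h1r.le, ← Real.rpow_neg h1r.le]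
  rw [this] at hswap
  rw [mul_comm (Real.Gamma s)] at hswap
  exact mul_right_cancel₀ hGs.ne' hswap

lemma gammaSeq_eq (t : ℝ) (n : ℕ) :
    Real.GammaSeq t n = (n : ℝ) ^ t * n.factorial / P t (n + 1) := by
  rw [Real.GammaSeq, P_prod]

lemma ratio_tendsto {x y : ℝ} (hx : 0 < x) (hy : 0 < y) {s : ℝ} (hs : 0 < s)
    (hsum : y + s = 2 * x) :
    Tendsto (fun k : ℕ => (P x k * P x k / (P y k * k.factorial)) / (P s k / k.factorial))
      atTop (𝓝 (Real.Gamma y * Real.Gamma s / Real.Gamma x ^ 2)) := by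
  rw [← tendsto_add_atTop_iff_nat 1]
  have hG : Tendsto (fun n : ℕ => Real.GammaSeq y n * Real.GammaSeq s n / Real.GammaSeq x n ^ 2)
      atTop (𝓝 (Real.Gamma y * Real.Gamma s / Real.Gamma x ^ 2)) := by
    refine Tendsto.div ((Real.GammaSeq_tendsto_Gamma y).mul (Real.GammaSeq_tendsto_Gamma s))
      ((Real.GammaSeq_tendsto_Gamma x).pow 2) ?_
    exact pow_ne_zero 2 (Real.Gamma_pos_of_pos hx).ne'
  refine hG.congr' ?_
  filter_upwards [eventually_ge_atTop 1] with n hn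
  have hn0 : (0:ℝ) < (n:ℝ) := by exact_mod_cast hn
  have hpx := P_pos hx (n + 1)
  have hpy := P_pos hy (n + 1)
  have hps := P_pos hs (n + 1)
  have hfac : (0:ℝ) < (n.factorial : ℝ) := by positivity
  have hfac1 : (0:ℝ) < ((n+1).factorial : ℝ) := by positivity
  have hrx : (0:ℝ) < (n:ℝ) ^ x := Real.rpow_pos_of_pos hn0 x
  have hry : (0:ℝ) < (n:ℝ) ^ y := Real.rpow_pos_of_pos hn0 y
  have hrs : (0:ℝ) < (n:ℝ) ^ s := Real.rpow_pos_of_pos hn0 s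
  have hpow : (n:ℝ) ^ y * (n:ℝ) ^ s = (n:ℝ) ^ x * (n:ℝ) ^ x := by
    rw [← Real.rpow_add hn0, ← Real.rpow_add hn0, hsum]
    ring_nf
  rw [gammaSeq_eq, gammaSeq_eq, gammaSeq_eq]
  field_simp
  linear_combination hpow

set_option maxHeartbeats 1000000 in
lemma abelian {a b : ℕ → ℝ} {L : ℝ} (hb : ∀ k, 0 < b k)
    (hab : Tendsto (fun k => a k / b k) atTop (𝓝 L))
    (hsb : ∀ r : ℝ, 0 < r → r < 1 → Summable (fun k => b k * r ^ k))
    (hB : Tendsto (fun r => ∑' k, b k * r ^ k) (𝓝[<] (1:ℝ)) atTop) :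
    Tendsto (fun r => (∑' k, a k * r ^ k) / (∑' k, b k * r ^ k))
      (𝓝[<] (1:ℝ)) (𝓝 L) := by
  -- global bound on |a k| in terms of b k, giving summability of the a-series
  have habs : ∀ᶠ k in atTop, |a k| ≤ (|L| + 1) * b k := by
    filter_upwards [hab.eventually (Metric.ball_mem_nhds L one_pos)] with k hk
    have hbk := hb k
    have h1 : |a k / b k - L| < 1 := by simpa [Real.dist_eq] using hk
    have h2 : |a k / b k| ≤ |L| + 1 := by
      calc |a k / b k| = |a k / b k - L + L| := by ring_nf
        _ ≤ |a k / b k - L| + |L| := abs_add_le _ _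
        _ ≤ |L| + 1 := by linarith
    have h3 : |a k| / b k ≤ |L| + 1 := by
      rwa [abs_div, abs_of_pos hbk] at h2
    calc |a k| = |a k| / b k * b k := by field_simp
      _ ≤ (|L| + 1) * b k := by
          exact mul_le_mul_of_nonneg_right h3 hbk.le
  have hsa : ∀ r : ℝ, 0 < r → r < 1 → Summable (fun k => a k * r ^ k) := by
    intro r hr0 hr1
    refine Summable.of_norm_bounded_eventually_nat (g := fun k => (|L| + 1) * (b k * r ^ k))
      ((hsb r hr0 hr1).mul_left _) ?_
    filter_upwards [habs] with k hk
    rw [Real.norm_eq_abs, abs_mul, abs_of_pos (pow_pos hr0 k)]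
    calc |a k| * r ^ k ≤ (|L| + 1) * b k * r ^ k :=
          mul_le_mul_of_nonneg_right hk (pow_pos hr0 k).le
      _ = (|L| + 1) * (b k * r ^ k) := by ring
  rw [Metric.tendsto_nhds]
  intro ε hε
  obtain ⟨N, hN⟩ := (hab.eventually (Metric.ball_mem_nhds L (half_pos hε))).exists_forall_of_atTop
  have hN' : ∀ k, N ≤ k → |a k - L * b k| ≤ ε / 2 * b k := by
    intro k hk
    have hbk := hb k
    have h1 : |a k / b k - L| < ε / 2 := by simpa [Real.dist_eq] using hN k hk
    have h2 : a k - L * b k = (a k / b k - L) * b k := by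
      rw [sub_mul, div_mul_cancel₀ _ hbk.ne']
    rw [h2, abs_mul, abs_of_pos hbk]
    exact mul_le_mul_of_nonneg_right h1.le hbk.le
  set M : ℝ := ∑ k ∈ Finset.range N, |a k - L * b k| with hM
  have hM0 : 0 ≤ M := Finset.sum_nonneg fun k _ => abs_nonneg _
  filter_upwards [hB.eventually_gt_atTop (max 0 (M / (ε / 2))),
    Ioo_mem_nhdsLT_of_mem (by constructor <;> norm_num : (1:ℝ) ∈ Ioc (0:ℝ) 1)]
    with r hBr hr
  obtain ⟨hr0, hr1⟩ := hr
  set B := ∑' k, b k * r ^ k with hBdef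
  set A := ∑' k, a k * r ^ k with hAdef
  have hBpos : 0 < B := lt_of_le_of_lt (le_max_left _ _) hBr
  have hMB : M < ε / 2 * B := by
    have := lt_of_le_of_lt (le_max_right 0 (M / (ε / 2))) hBr
    rwa [div_lt_iff₀ (half_pos hε), mul_comm] at this
  have hSa := hsa r hr0 hr1
  have hSb := hsb r hr0 hr1
  -- the difference series
  set d : ℕ → ℝ := fun k => (a k - L * b k) * r ^ k with hd
  have hSd : Summable d := by
    have : d = fun k => a k * r ^ k - L * (b k * r ^ k) := by
      funext k; simp only [hd]; ring
    rw [this]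
    exact hSa.sub (hSb.mul_left L)
  have hSd' : Summable (fun k => |d k|) := by
    refine Summable.of_norm_bounded_eventually_nat
      (g := fun k => (2 * |L| + 1) * (b k * r ^ k)) (hSb.mul_left _) ?_
    filter_upwards [habs] with k hk
    rw [norm_abs_eq_norm, Real.norm_eq_abs, hd]
    simp only
    rw [abs_mul, abs_of_pos (pow_pos hr0 k)]
    have : |a k - L * b k| ≤ (2 * |L| + 1) * b k := by
      calc |a k - L * b k| ≤ |a k| + |L * b k| := abs_sub _ _
        _ = |a k| + |L| * b k := by rw [abs_mul, abs_of_pos (hb k)]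
        _ ≤ (|L| + 1) * b k + |L| * b k := by linarith
        _ = (2 * |L| + 1) * b k := by ring
    calc |a k - L * b k| * r ^ k ≤ (2 * |L| + 1) * b k * r ^ k :=
          mul_le_mul_of_nonneg_right this (pow_pos hr0 k).le
      _ = (2 * |L| + 1) * (b k * r ^ k) := by ring
  have hAB : A - L * B = ∑' k, d k := by
    rw [hAdef, hBdef, ← Summable.tsum_mul_left L hSb, ← Summable.tsum_sub hSa (hSb.mul_left L)]
    refine tsum_congr fun k => ?_
    simp only [hd]; ring
  -- bound |∑ d|
  have key : |A - L * B| ≤ M + ε / 2 * B := by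
    rw [hAB]
    have h1 : |∑' k, d k| ≤ ∑' k, |d k| := norm_tsum_le_tsum_norm (f := d) hSd'
    refine h1.trans ?_
    rw [← Summable.sum_add_tsum_nat_add N hSd']
    have h2 : ∑ k ∈ Finset.range N, |d k| ≤ M := by
      refine Finset.sum_le_sum fun k _ => ?_
      rw [hd]
      simp only
      rw [abs_mul, abs_of_pos (pow_pos hr0 k)]
      exact mul_le_of_le_one_right (abs_nonneg _) (pow_le_one₀ hr0.le hr1.le)
    have h3 : (∑' k, |d (k + N)|) ≤ ε / 2 * B := by
      have h4 : (∑' k, |d (k + N)|) ≤ ∑' k, ε / 2 * (b (k + N) * r ^ (k + N)) := by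
        refine Summable.tsum_le_tsum (fun k => ?_) ((_root_.summable_nat_add_iff (f := fun k => |d k|) N).mpr hSd')
          (((_root_.summable_nat_add_iff (f := fun k => b k * r ^ k) N).mpr hSb).mul_left _)
        rw [hd]
        simp only
        rw [abs_mul, abs_of_pos (pow_pos hr0 (k + N))]
        have := hN' (k + N) (Nat.le_add_left N k)
        calc |a (k + N) - L * b (k + N)| * r ^ (k + N)
            ≤ ε / 2 * b (k + N) * r ^ (k + N) :=
              mul_le_mul_of_nonneg_right this (pow_pos hr0 _).le
          _ = ε / 2 * (b (k + N) * r ^ (k + N)) := by ring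
      refine h4.trans ?_
      rw [Summable.tsum_mul_left _ ((_root_.summable_nat_add_iff (f := fun k => b k * r ^ k) N).mpr hSb)]
      refine mul_le_mul_of_nonneg_left ?_ (half_pos hε).le
      have h5 := Summable.sum_add_tsum_nat_add N hSb
      have h6 : 0 ≤ ∑ k ∈ Finset.range N, b k * r ^ k :=
        Finset.sum_nonneg fun k _ => (mul_pos (hb k) (pow_pos hr0 k)).le
      rw [hBdef]
      linarith [h5]
    linarith
  rw [Real.dist_eq]
  have : A / B - L = (A - L * B) / B := by
    field_simp
  rw [this, abs_div, abs_of_pos hBpos]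
  rw [div_lt_iff₀ hBpos]
  calc |A - L * B| ≤ M + ε / 2 * B := key
    _ < ε / 2 * B + ε / 2 * B := by linarith
    _ = ε * B := by ring

end Hyp2F1Aux

/-- For `y > 0` and `y < 2x`,
`₂F₁(x, x; y; r) ~ (Γ(y)Γ(2x-y)/Γ(x)²) (1-r)^(y-2x)` as `r → 1⁻`. -/
theorem hyp2F1_asymp_pow (x y : ℝ) (hy : 0 < y) (hxy : y < 2 * x) :
    Tendsto
      (fun r : ℝ => hyp2F1 x x y r /
        ((Real.Gamma y * Real.Gamma (2 * x - y) / (Real.Gamma x) ^ 2) *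
          (1 - r) ^ (y - 2 * x)))
      (nhdsWithin 1 (Set.Iio 1)) (nhds 1) := by
  have hx : 0 < x := by linarith
  set s : ℝ := 2 * x - y with hs_def
  have hs : 0 < s := by rw [hs_def]; linarith
  have hC : Real.Gamma y * Real.Gamma s / Real.Gamma x ^ 2 ≠ 0 := by
    have h1 := Real.Gamma_pos_of_pos hy
    have h2 := Real.Gamma_pos_of_pos hs
    have h3 := Real.Gamma_pos_of_pos hx
    positivity
  have hb : ∀ k : ℕ, 0 < Hyp2F1Aux.P s k / k.factorial := fun k => by
    have := Hyp2F1Aux.P_pos hs k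
    have h2 : (0:ℝ) < k.factorial := by positivity
    positivity
  have hab := Hyp2F1Aux.ratio_tendsto hx hy hs (by rw [hs_def]; ring)
  have hsb : ∀ r : ℝ, 0 < r → r < 1 →
      Summable (fun k : ℕ => Hyp2F1Aux.P s k / k.factorial * r ^ k) :=
    fun r h0 h1 => Hyp2F1Aux.summable_b hs h0 h1
  have hBeq : ∀ r : ℝ, 0 < r → r < 1 →
      (∑' k : ℕ, Hyp2F1Aux.P s k / k.factorial * r ^ k) = (1 - r) ^ (-s) :=
    fun r h0 h1 => Hyp2F1Aux.tsum_b_eq hs h0 h1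
  have hmem : (1:ℝ) ∈ Set.Ioc (0:ℝ) 1 := by constructor <;> norm_num
  have h1 : Tendsto (fun r : ℝ => 1 - r) (𝓝[<] (1:ℝ)) (𝓝[>] (0:ℝ)) := by
    apply tendsto_nhdsWithin_of_tendsto_nhds_of_eventually_within
    · have h : Tendsto (fun r : ℝ => 1 - r) (𝓝 1) (𝓝 0) := by
        simpa using (continuous_sub_left (1:ℝ)).tendsto 1
      exact h.mono_left nhdsWithin_le_nhds
    · filter_upwards [self_mem_nhdsWithin] with r hr
      simpa using hr
  have h2 : Tendsto (fun t : ℝ => t ^ (-s)) (𝓝[>] (0:ℝ)) atTop := by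
    have h3 : Tendsto (fun t : ℝ => t ^ s) (𝓝[>] (0:ℝ)) (𝓝[>] (0:ℝ)) := by
      apply tendsto_nhdsWithin_of_tendsto_nhds_of_eventually_within
      · have hc : ContinuousAt (fun t : ℝ => t ^ s) 0 :=
          Real.continuousAt_rpow_const 0 s (Or.inr hs.le)
        have h4 := hc.tendsto
        rw [Real.zero_rpow hs.ne'] at h4
        exact h4.mono_left nhdsWithin_le_nhds
      · filter_upwards [self_mem_nhdsWithin] with t ht
        exact Real.rpow_pos_of_pos ht s
    refine (tendsto_inv_nhdsGT_zero.comp h3).congr' ?_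
    filter_upwards [self_mem_nhdsWithin] with t ht
    simp only [Function.comp_apply]
    rw [Real.rpow_neg (le_of_lt ht)]
  have hB : Tendsto (fun r : ℝ => ∑' k : ℕ, Hyp2F1Aux.P s k / k.factorial * r ^ k)
      (𝓝[<] (1:ℝ)) atTop := by
    refine (h2.comp h1).congr' ?_
    filter_upwards [Ioo_mem_nhdsLT_of_mem hmem] with r hr
    exact (hBeq r hr.1 hr.2).symm
  have main := Hyp2F1Aux.abelian
    (a := fun k : ℕ => Hyp2F1Aux.P x k * Hyp2F1Aux.P x k / (Hyp2F1Aux.P y k * k.factorial))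
    (b := fun k : ℕ => Hyp2F1Aux.P s k / k.factorial) hb hab hsb hB
  have main2 := main.div_const (Real.Gamma y * Real.Gamma s / Real.Gamma x ^ 2)
  rw [div_self hC] at main2
  refine main2.congr' ?_
  filter_upwards [Ioo_mem_nhdsLT_of_mem hmem] with r hr
  have hBr := hBeq r hr.1 hr.2
  have hA : hyp2F1 x x y r =
      ∑' k : ℕ, Hyp2F1Aux.P x k * Hyp2F1Aux.P x k / (Hyp2F1Aux.P y k * k.factorial) * r ^ k := rfl
  rw [show y - 2 * x = -s by rw [hs_def]; ring, ← hBr, hA, div_div, mul_comm]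
end
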